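/- The symmetric three-point rule on [0,1] with nodes 1/2 − (1/14)√(45 − 2√102), 1/2, 1/2 + (1/14)√(45 − 2√102) and weights 659/2310 + (8/3465)√102, 496/1155 − (16/3465)√102, 659/2310 + (8/3465)√102 integrates exactly every polynomial p of degree at most 7 with p(0) = p(1) = p'(0) = p'(1) = 0. -/

import Mathlib

/-- The second C¹ septic rule C1xD7x2: symmetric three-point rule, exact on
septics vanishing to order 2 at 0 and 1. -/
theorem c1_degree7_rule2 :
    ∀ p : Polynomial ℝ, p.natDegree ≤ 7 →
      p.eval 0 = 0 → p.eval 1 = 0 →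
      p.derivative.eval 0 = 0 → p.derivative.eval 1 = 0 →
      ∫ x in (0:ℝ)..1, p.eval x =
        (659/2310 + (8/3465) * Real.sqrt 102) *
            p.eval (1/2 - (1/14) * Real.sqrt (45 - 2 * Real.sqrt 102)) +
          (496/1155 - (16/3465) * Real.sqrt 102) * p.eval (1/2) +
          (659/2310 + (8/3465) * Real.sqrt 102) *
            p.eval (1/2 + (1/14) * Real.sqrt (45 - 2 * Real.sqrt 102)) := by
  intro p hdeg h0 h1 hd0 hd1
  -- Factor p = X^2 (X-1)^2 q
  have hdvd : Polynomial.X ^ 2 * (Polynomial.X - Polynomial.C 1) ^ 2 ∣ p := by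
    have hX : Polynomial.X ^ 2 ∣ p := by
      obtain ⟨r, hr⟩ := Polynomial.X_dvd_iff.mpr (show p.coeff 0 = 0 by rwa [Polynomial.coeff_zero_eq_eval_zero])
      have hr0 : r.eval 0 = 0 := by
        have := hd0
        rw [hr, Polynomial.derivative_mul] at this
        simpa using this
      obtain ⟨r2, hr2⟩ := Polynomial.X_dvd_iff.mpr (show r.coeff 0 = 0 by rwa [Polynomial.coeff_zero_eq_eval_zero])
      exact ⟨r2, by rw [hr, hr2]; ring⟩
    have hX1 : (Polynomial.X - Polynomial.C 1) ^ 2 ∣ p := by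
      obtain ⟨r, hr⟩ := Polynomial.dvd_iff_isRoot.mpr h1
      have hr0 : r.eval 1 = 0 := by
        have := hd1
        rw [hr, Polynomial.derivative_mul] at this
        simpa using this
      obtain ⟨r2, hr2⟩ := Polynomial.dvd_iff_isRoot.mpr hr0
      exact ⟨r2, by rw [hr, hr2]; ring⟩
    have hcop : IsCoprime (Polynomial.X ^ 2) ((Polynomial.X - Polynomial.C 1) ^ 2 : Polynomial ℝ) := by
      apply IsCoprime.pow
      exact ⟨1, -1, by rw [Polynomial.C_1]; ring⟩
    exact hcop.mul_dvd hX hX1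
  obtain ⟨q, hq⟩ := hdvd
  -- q has degree ≤ 3
  have hqdeg : q.natDegree ≤ 3 := by
    rcases eq_or_ne q 0 with h | h
    · simp [h]
    · have hfac : (Polynomial.X ^ 2 * (Polynomial.X - Polynomial.C 1) ^ 2 : Polynomial ℝ) ≠ 0 :=
        mul_ne_zero (pow_ne_zero _ Polynomial.X_ne_zero)
          (pow_ne_zero _ (Polynomial.X_sub_C_ne_zero 1))
      have hd4 : (Polynomial.X ^ 2 * (Polynomial.X - Polynomial.C 1) ^ 2 : Polynomial ℝ).natDegree = 4 := by
        rw [Polynomial.natDegree_mul (pow_ne_zero _ Polynomial.X_ne_zero)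
          (pow_ne_zero _ (Polynomial.X_sub_C_ne_zero 1))]
        rw [Polynomial.natDegree_pow, Polynomial.natDegree_pow, Polynomial.natDegree_X,
          Polynomial.natDegree_X_sub_C]
      have := hdeg
      rw [hq, Polynomial.natDegree_mul hfac h, hd4] at this
      omega
  set a := q.coeff 0 with ha
  set b := q.coeff 1 with hb
  set c := q.coeff 2 with hc
  set d := q.coeff 3 with hd
  have heval : ∀ x : ℝ, p.eval x = x^2 * (x-1)^2 * (a + b*x + c*x^2 + d*x^3) := by
    intro x
    have hqe : q.eval x = a + b*x + c*x^2 + d*x^3 := by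
      rw [Polynomial.eval_eq_sum_range' (lt_of_le_of_lt hqdeg (by norm_num : (3:ℕ) < 4))]
      simp [Finset.sum_range_succ]
      rfl
    rw [hq]
    simp [hqe]
  -- compute the integral
  have hint : ∫ x in (0:ℝ)..1, p.eval x = a/30 + b/60 + c/105 + d/168 := by
    simp only [heval]
    have := intervalIntegral.integral_eq_sub_of_hasDerivAt
      (f := fun x : ℝ => a*(x^3/3 - x^4/2 + x^5/5) + b*(x^4/4 - 2*x^5/5 + x^6/6)
        + c*(x^5/5 - x^6/3 + x^7/7) + d*(x^6/6 - 2*x^7/7 + x^8/8))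
      (f' := fun x : ℝ => x^2 * (x-1)^2 * (a + b*x + c*x^2 + d*x^3))
      (a := 0) (b := 1)
      (by
        intro x _
        have H := ((((((hasDerivAt_pow 3 x).div_const 3).sub ((hasDerivAt_pow 4 x).div_const 2)).add
            ((hasDerivAt_pow 5 x).div_const 5)).const_mul a).add
          (((((hasDerivAt_pow 4 x).div_const 4).sub (((hasDerivAt_pow 5 x).const_mul 2).div_const 5)).add
            ((hasDerivAt_pow 6 x).div_const 6)).const_mul b)).add
          ((((((hasDerivAt_pow 5 x).div_const 5).sub ((hasDerivAt_pow 6 x).div_const 3)).add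
            ((hasDerivAt_pow 7 x).div_const 7)).const_mul c).add
          (((((hasDerivAt_pow 6 x).div_const 6).sub (((hasDerivAt_pow 7 x).const_mul 2).div_const 7)).add
            ((hasDerivAt_pow 8 x).div_const 8)).const_mul d))
        convert H using 1
        · ext y; simp only [Pi.add_apply, Pi.sub_apply]; ring
        · push_cast; ring)
      (by
        apply Continuous.intervalIntegrable
        continuity)
    rw [this]
    norm_num
    ring
  rw [hint]
  rw [heval, heval, heval]
  set s := Real.sqrt 102 with hs
  set t := Real.sqrt (45 - 2 * s) with ht
  have hs2 : s ^ 2 = 102 := Real.sq_sqrt (by norm_num)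
  have hsnn : 0 ≤ s := Real.sqrt_nonneg _
  have hsle : s ≤ 11 := by nlinarith
  have ht2 : t ^ 2 = 45 - 2 * s := Real.sq_sqrt (by linarith)
  linear_combination
    ((1679791/17393228160)*d + (659/158120256)*d*t^2 + (-659/5797742720)*d*t^4 + (6347/2371803840)*d*s + (139/532445760)*d*s*t^2 + (-1/1087076760)*d*s*t^4 + (-521/1185901920)*d*s^2 + (1/543538380)*d*s^2*t^2 + (-1/271769190)*d*s^3 + (1700879/8696614080)*c + (659/2174153520)*c*t^2 + (-659/8696614080)*c*t^4 + (20341/2608984224)*c*s + (41/266222880)*c*s*t^2 + (-1/1630615140)*c*s*t^4 + (-1649/6522460560)*c*s^2 + (1/815307570)*c*s^2*t^2 + (-1/407653785)*c*s^3 + (34927/88740960)*b + (-659/88740960)*b*t^2 + (1/55440)*b*s + (-1/16638930)*b*s*t^2 + (1/8319465)*b*s^2 + (34927/44370480)*a + (-659/44370480)*a*t^2 + (1/27720)*a*s + (-1/8319465)*a*s*t^2 + (2/8319465)*a*s^2) * ht2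
    + ((-1987/81530757)*d + (4651/6522460560)*d*s + (1/135884595)*d*s^2 + (-86323/3261230280)*c + (1289/3261230280)*c*s + (2/407653785)*c*s^2 + (-2041/66555720)*b + (-2/8319465)*b*s + (-2041/33277860)*a + (-4/8319465)*a*s) * hs2
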